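/- The symmetry group of the unit P-simplex acts transitively on its vertices: for any indices i, j with 1 ≤ i, j ≤ P+1, there exists a linear isometry R of ℝ^P and a permutation σ of {1, …, P+1} such that R(v_k) = v_{σ(k)} for every k and σ(i) = j. -/

import Mathlib

open scoped BigOperators

/-- The all-ones vector in `ℝ^P`. -/
noncomputable def onesVec (P : ℕ) : EuclideanSpace ℝ (Fin P) :=
  (WithLp.equiv 2 (Fin P → ℝ)).symm fun _ => 1

/-- The vertices of the unit `P`-simplex: for `j < P`,
`v_j = √((P+1)/P) • e_j − ((√(P+1) − 1)/(P√P)) • 𝟏`, and `v_{P+1} = −(1/√P) • 𝟏`. -/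
noncomputable def simplexVertex (P : ℕ) (j : Fin (P + 1)) : EuclideanSpace ℝ (Fin P) :=
  if h : (j : ℕ) < P then
    Real.sqrt ((P + 1) / P) • EuclideanSpace.single ⟨(j : ℕ), h⟩ (1 : ℝ)
      - ((Real.sqrt (P + 1) - 1) / (P * Real.sqrt P)) • onesVec P
  else
    (-1 / Real.sqrt P) • onesVec P

open scoped RealInnerProductSpace

lemma inner_ones_ones (P : ℕ) : ⟪onesVec P, onesVec P⟫ = (P : ℝ) := by
  simp [onesVec, PiLp.inner_apply, PiLp.toLp_apply, EuclideanSpace.norm_eq]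

lemma inner_single_ones (P : ℕ) (i : Fin P) :
    ⟪EuclideanSpace.single i (1:ℝ), onesVec P⟫ = 1 := by
  simp [EuclideanSpace.inner_single_left, onesVec, PiLp.toLp_apply]

lemma inner_ones_single (P : ℕ) (i : Fin P) :
    ⟪onesVec P, EuclideanSpace.single i (1:ℝ)⟫ = 1 := by
  rw [real_inner_comm]; exact inner_single_ones P i

lemma inner_single_single (P : ℕ) (i j : Fin P) :
    ⟪EuclideanSpace.single i (1:ℝ), EuclideanSpace.single j (1:ℝ)⟫
      = if i = j then 1 else 0 := by
  simp [EuclideanSpace.inner_single_left, EuclideanSpace.single_apply]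

lemma gram (P : ℕ) (hP : 1 ≤ P) (a b : Fin (P + 1)) :
    ⟪simplexVertex P a, simplexVertex P b⟫ = if a = b then 1 else -1 / (P:ℝ) := by
  have hP0 : (0:ℝ) < P := by exact_mod_cast hP
  unfold simplexVertex
  set s := Real.sqrt P with hs
  set t := Real.sqrt ((P:ℝ)+1) with ht
  have hs2 : s * s = P := Real.mul_self_sqrt (by positivity)
  have ht2 : t * t = (P:ℝ) + 1 := Real.mul_self_sqrt (by positivity)
  have hs0 : (0:ℝ) < s := Real.sqrt_pos.mpr hP0
  have hdiv : Real.sqrt (((P:ℝ) + 1) / P) = t / s := by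
    rw [Real.sqrt_div (by positivity), ← ht, ← hs]
  rcases lt_or_ge (a:ℕ) P with ha | ha <;> rcases lt_or_ge (b:ℕ) P with hb | hb
  · rw [dif_pos ha, dif_pos hb, hdiv]
    have hab : a = b ↔ (⟨(a:ℕ), ha⟩ : Fin P) = ⟨(b:ℕ), hb⟩ := by
      constructor <;> intro h <;> [simp [h]; (ext; simpa using congrArg Fin.val h)]
    simp only [inner_sub_left, inner_sub_right, real_inner_smul_left, real_inner_smul_right,
      inner_single_single, inner_single_ones, inner_ones_single, inner_ones_ones]
    by_cases h : a = b
    · rw [if_pos h, if_pos (hab.mp h)]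
      rw [← hs2]
      have ht2' : t * t = s * s + 1 := by rw [ht2, hs2]
      field_simp
      linear_combination (s^2 - 1) * ht2'
    · rw [if_neg h, if_neg (fun hh => h (hab.mpr hh))]
      rw [← hs2]
      have ht2' : t * t = s * s + 1 := by rw [ht2, hs2]
      field_simp
      linear_combination (-1) * ht2'
  · rw [dif_pos ha, dif_neg (not_lt.mpr hb), hdiv]
    have hab : a ≠ b := fun h => absurd (h ▸ ha) (not_lt.mpr hb)
    rw [if_neg hab]
    simp only [inner_sub_left, real_inner_smul_left, real_inner_smul_right,
      inner_single_ones, inner_ones_ones]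
    rw [← hs2]
    field_simp
    ring
  · rw [dif_neg (not_lt.mpr ha), dif_pos hb, hdiv]
    have hab : a ≠ b := fun h => absurd (h ▸ hb) (not_lt.mpr ha)
    rw [if_neg hab]
    simp only [inner_sub_right, real_inner_smul_left, real_inner_smul_right,
      inner_ones_single, inner_ones_ones]
    rw [← hs2]
    field_simp
    ring
  · have hab : a = b := by
      have h1 := a.isLt; have h2 := b.isLt; ext; omega
    rw [dif_neg (not_lt.mpr ha), dif_neg (not_lt.mpr hb), if_pos hab]
    simp only [real_inner_smul_left, real_inner_smul_right, inner_ones_ones]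
    rw [← hs2]
    field_simp

lemma norm_simplexVertex (P : ℕ) (hP : 1 ≤ P) (a : Fin (P + 1)) :
    ‖simplexVertex P a‖ = 1 := by
  have h := gram P hP a a
  rw [if_pos rfl, real_inner_self_eq_norm_mul_norm] at h
  nlinarith [norm_nonneg (simplexVertex P a)]

/-- The symmetry group of the unit `P`-simplex acts transitively on its vertices: for any
`i, j` there is a linear isometry `R` of `ℝ^P` and a permutation `σ` of the indices with
`R(v_k) = v_{σ(k)}` for all `k` and `σ(i) = j`. -/
theorem simplex_symmetry_transitive (P : ℕ) (hP : 1 ≤ P) (i j : Fin (P + 1)) :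
    ∃ (R : EuclideanSpace ℝ (Fin P) ≃ₗᵢ[ℝ] EuclideanSpace ℝ (Fin P))
      (σ : Equiv.Perm (Fin (P + 1))),
      (∀ k : Fin (P + 1), R (simplexVertex P k) = simplexVertex P (σ k)) ∧ σ i = j := by
  by_cases hij : i = j
  · exact ⟨LinearIsometryEquiv.refl ℝ _, Equiv.refl _, fun k => rfl, hij⟩
  · set u := simplexVertex P i - simplexVertex P j with hu
    refine ⟨Submodule.reflection (ℝ ∙ u)ᗮ, Equiv.swap i j, fun k => ?_, Equiv.swap_apply_left i j⟩
    by_cases hk : k = i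
    · subst hk
      rw [Equiv.swap_apply_left]
      exact Submodule.reflection_sub (by rw [norm_simplexVertex P hP, norm_simplexVertex P hP])
    by_cases hk' : k = j
    · subst hk'
      rw [Equiv.swap_apply_right]
      have h1 : Submodule.reflection (ℝ ∙ u)ᗮ (simplexVertex P i) = simplexVertex P k :=
        Submodule.reflection_sub (by rw [norm_simplexVertex P hP, norm_simplexVertex P hP])
      have := congrArg (Submodule.reflection (ℝ ∙ u)ᗮ) h1
      rw [Submodule.reflection_reflection] at this; exact this.symm
    · rw [Equiv.swap_apply_of_ne_of_ne hk hk']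
      apply Submodule.reflection_mem_subspace_eq_self
      rw [Submodule.mem_orthogonal_singleton_iff_inner_left]
      rw [hu, inner_sub_right, gram P hP, gram P hP,
        if_neg hk, if_neg hk', sub_self]
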